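/- For elementary CA rule 140, the state of cell j after n iterations (n ≥ 2) starting from any initial configuration x ∈ {0,1}^ℤ is given by [F140^n(x)]_j = (1−x_{j−1})·x_j + ∏_{i=j−1}^{j+n} x_i. -/

import Mathlib

/-- Polynomial form of the local function of rule 140. -/
def f140 (a b c : ℤ) : ℤ := (1 - a) * b + a * b * c

/-- Global map of rule 140 on configurations. -/
def F140 (x : ℤ → ℤ) : ℤ → ℤ := fun i => f140 (x (i - 1)) (x i) (x (i + 1))

lemma prod_icc_succ (f : ℤ → ℤ) (a b : ℤ) (h : a ≤ b + 1) :
    ∏ i ∈ Finset.Icc a (b + 1), f i = (∏ i ∈ Finset.Icc a b, f i) * f (b + 1) := by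
  have : Finset.Icc a (b + 1) = insert (b + 1) (Finset.Icc a b) := by
    ext k; simp [Finset.mem_Icc]; omega
  rw [this, Finset.prod_insert (by simp), mul_comm]

lemma prod_pair (f : ℤ → ℤ) (a : ℤ) :
    ∏ i ∈ Finset.Icc a (a + 1), f i = f a * f (a + 1) := by
  rw [prod_icc_succ _ _ _ (by omega), Finset.Icc_self, Finset.prod_singleton]

lemma prod_triple (f : ℤ → ℤ) (a : ℤ) :
    ∏ i ∈ Finset.Icc a (a + 2), f i = f a * f (a + 1) * f (a + 2) := by
  have e : a + 2 = (a + 1) + 1 := by ring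
  rw [e, prod_icc_succ _ _ _ (by omega), prod_pair]

lemma F140_binary (x : ℤ → ℤ) (hx : ∀ i, x i = 0 ∨ x i = 1) (i : ℤ) :
    F140 x i = 0 ∨ F140 x i = 1 := by
  rcases hx (i - 1) with h1 | h1 <;> rcases hx i with h2 | h2 <;>
    rcases hx (i + 1) with h3 | h3 <;> simp [F140, f140, h1, h2, h3]

lemma prod_key (x : ℤ → ℤ) (hx : ∀ i, x i = 0 ∨ x i = 1) (l : ℤ) (m : ℕ) :
    ∏ i ∈ Finset.Icc l (l + ((m : ℤ) + 1)), F140 x i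
      = ∏ i ∈ Finset.Icc l (l + ((m : ℤ) + 2)), x i := by
  induction m with
  | zero =>
      push_cast
      rw [prod_pair, prod_triple]
      have e1 : l + 1 - 1 = l := by ring
      rcases hx (l - 1) with h1 | h1 <;> rcases hx l with h2 | h2 <;>
        rcases hx (l + 1) with h3 | h3 <;>
          simp [F140, f140, h1, h2, h3, e1] <;> ring
  | succ m ih =>
      push_cast
      rw [show l + ((m : ℤ) + 1 + 1) = (l + ((m : ℤ) + 1)) + 1 by ring,
        show l + ((m : ℤ) + 1 + 2) = (l + ((m : ℤ) + 2)) + 1 by ring,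
        prod_icc_succ _ _ _ (by omega), prod_icc_succ _ _ _ (by omega), ih]
      set r : ℤ := l + ((m : ℤ) + 1) + 1 with hr
      have hr2 : l + ((m : ℤ) + 2) = r := by rw [hr]; ring
      rw [hr2]
      rcases hx (r - 1) with hA | hA
      · have h0 : ∏ i ∈ Finset.Icc l r, x i = 0 :=
          Finset.prod_eq_zero (by simp [Finset.mem_Icc]; omega) hA
        simp [h0]
      · rcases hx r with hB | hB
        · have h0 : ∏ i ∈ Finset.Icc l r, x i = 0 :=
            Finset.prod_eq_zero (by simp [Finset.mem_Icc]; omega) hB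
          simp [h0]
        · simp [F140, f140, hA, hB]

lemma key (n : ℕ) : ∀ (x : ℤ → ℤ), (∀ i, x i = 0 ∨ x i = 1) → ∀ j : ℤ,
    F140^[n + 1] x j
      = (1 - x (j - 1)) * x j + ∏ i ∈ Finset.Icc (j - 1) (j + ((n : ℤ) + 1)), x i := by
  induction n with
  | zero =>
      intro x hx j
      push_cast
      rw [Function.iterate_one,
        show j + (1 : ℤ) = (j - 1) + 2 by ring, prod_triple]
      have e1 : j - 1 + 1 = j := by ring
      have e2 : j - 1 + 2 = j + 1 := by ring
      rw [e1, e2]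
      show f140 (x (j - 1)) (x j) (x (j + 1)) = _
      simp [f140]
  | succ n ih =>
      intro x hx j
      rw [Function.iterate_succ_apply, ih (F140 x) (F140_binary x hx) j]
      push_cast
      rw [show j + ((n : ℤ) + 1) = (j - 1) + ((n : ℤ) + 1 + 1) by ring]
      have pk := prod_key x hx (j - 1) (n + 1)
      push_cast at pk
      rw [pk, show j - 1 + ((n : ℤ) + 1 + 2) = j + ((n : ℤ) + 1 + 1) by ring]
      congr 1
      have e3 : j - 1 - 1 = j - 2 := by ring
      have e4 : j - 1 + 1 = j := by ring
      rcases hx (j - 2) with h1 | h1 <;> rcases hx (j - 1) with h2 | h2 <;>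
        rcases hx j with h3 | h3 <;>
          simp [F140, f140, h1, h2, h3, e3, e4] <;> ring

theorem stmt8 (x : ℤ → ℤ) (hx : ∀ i, x i = 0 ∨ x i = 1)
    (n : ℕ) (hn : 2 ≤ n) (j : ℤ) :
    (F140^[n] x) j = (1 - x (j - 1)) * x j + ∏ i ∈ Finset.Icc (j - 1) (j + n), x i := by
  obtain ⟨m, rfl⟩ : ∃ m, n = m + 1 := ⟨n - 1, by omega⟩
  have h := key m x hx j
  push_cast at h ⊢
  exact h
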